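/- arXiv:2407.11328 — 2 statements merged into one kernel-verified Lean document; each statement's English description precedes it below -/
import Mathlib

section
/- Let X₁ and X₂ be degree-similar finite simple graphs, and let Y be a finite simple graph with distinct vertices w₁,…,w_k. Choose distinct vertices u₁,…,u_k ∈ V(X₁) and distinct vertices v₁,…,v_k ∈ V(X₂) such that for each i ∈ {1,…,k}: (i) no other vertex of X₁ has the same degree as uᵢ, and no other vertex of X₂ has the same degree as vᵢ; (ii) deg_{X₁}(uᵢ) = deg_{X₂}(vᵢ); and (iii) the induced subgraph X₁[{u₁,…,u_k}] is connected. Let Γ₁ be the k-sum of X₁ and Y obtained from the disjoint union of X₁ and Y by identifying uᵢ with wᵢ for each i (two identified vertices are adjacent in Γ₁ iff the corresponding vertices are adjacent in X₁ or in Y), and let Γ₂ be the k-sum of X₂ and Y obtained by identifying vᵢ with wᵢ. Then Γ₁ and Γ₂ are degree similar. -/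
open Matrix

open Classical in
noncomputable def adjMat {V : Type*} (G : SimpleGraph V) : Matrix V V ℝ :=
  Matrix.of fun a b => if G.Adj a b then 1 else 0

noncomputable def gdeg {V : Type*} (G : SimpleGraph V) (v : V) : ℕ :=
  Nat.card (G.neighborSet v)

noncomputable def degMat {V : Type*} [DecidableEq V] (G : SimpleGraph V) : Matrix V V ℝ :=
  Matrix.diagonal fun v => (gdeg G v : ℝ)

/-- Two graphs (on possibly different vertex types of the same cardinality) are
degree similar if there is an invertible real matrix conjugating the adjacency
matrix of the first to that of the second, and likewise for the degree matrices. -/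
def DegreeSimilar {V W : Type*} [Fintype V] [Fintype W] [DecidableEq V] [DecidableEq W]
    (G : SimpleGraph V) (H : SimpleGraph W) : Prop :=
  ∃ (e : V ≃ W) (M : Matrix V V ℝ), IsUnit M ∧
    M⁻¹ * adjMat G * M = (adjMat H).submatrix ⇑e ⇑e ∧
    M⁻¹ * degMat G * M = (degMat H).submatrix ⇑e ⇑e

/-- The `k`-sum of `X` and `Y`, obtained by identifying the vertices `u 0, …, u (k-1)`
of `X` with the vertices `w 0, …, w (k-1)` of `Y` (two identified vertices are
adjacent iff the corresponding vertices are adjacent in `X` or in `Y`). -/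
def kSum {V W : Type*} [DecidableEq W] {k : ℕ} (X : SimpleGraph V) (u : Fin k → V)
    (Y : SimpleGraph W) (w : Fin k → W) :
    SimpleGraph (V ⊕ {x : W // ∀ i, x ≠ w i}) :=
  SimpleGraph.fromRel fun a b =>
    match a, b with
    | Sum.inl a, Sum.inl b =>
        X.Adj a b ∨ ∃ i j, a = u i ∧ b = u j ∧ Y.Adj (w i) (w j)
    | Sum.inr a, Sum.inr b => Y.Adj a.val b.val
    | Sum.inl a, Sum.inr b => ∃ i, a = u i ∧ Y.Adj (w i) b.val
    | Sum.inr _, Sum.inl _ => False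

section AuxLemmas

private def sumSubtypeEquiv {α β : Type*} (p : α ⊕ β → Prop) :
    {x // p x} ≃ {a // p (Sum.inl a)} ⊕ {b // p (Sum.inr b)} where
  toFun x := match x with
    | ⟨Sum.inl a, h⟩ => Sum.inl ⟨a, h⟩
    | ⟨Sum.inr b, h⟩ => Sum.inr ⟨b, h⟩
  invFun x := match x with
    | Sum.inl a => ⟨Sum.inl a.1, a.2⟩
    | Sum.inr b => ⟨Sum.inr b.1, b.2⟩
  left_inv := by rintro ⟨a | b, h⟩ <;> rfl
  right_inv := by rintro (⟨a, h⟩ | ⟨b, h⟩) <;> rfl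

private lemma card_subtype_sum {α β : Type*} [Finite α] [Finite β] (p : α ⊕ β → Prop) :
    Nat.card {x // p x} = Nat.card {a // p (Sum.inl a)} + Nat.card {b // p (Sum.inr b)} := by
  rw [Nat.card_congr (sumSubtypeEquiv p), Nat.card_sum]

open Classical in
private noncomputable def orEquiv {α : Type*} (p q : α → Prop) :
    {x // p x ∨ q x} ≃ {x // p x} ⊕ {x // q x ∧ ¬ p x} where
  toFun x := if hp : p x.1 then Sum.inl ⟨x.1, hp⟩ else Sum.inr ⟨x.1, x.2.resolve_left hp, hp⟩
  invFun x := match x with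
    | Sum.inl a => ⟨a.1, Or.inl a.2⟩
    | Sum.inr b => ⟨b.1, Or.inr b.2.1⟩
  left_inv := by
    rintro ⟨x, hx⟩
    by_cases hp : p x <;> simp [hp]
  right_inv := by
    rintro (⟨a, ha⟩ | ⟨b, hb⟩)
    · simp [ha]
    · simp [hb.2]

private lemma card_subtype_or {α : Type*} [Finite α] (p q : α → Prop) :
    Nat.card {x // p x ∨ q x} = Nat.card {x // p x} + Nat.card {x // q x ∧ ¬ p x} := by
  rw [Nat.card_congr (orEquiv p q), Nat.card_sum]

private lemma gdeg_eq {V : Type*} (G : SimpleGraph V) (v : V) :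
    gdeg G v = Nat.card {x // G.Adj v x} := rfl

end AuxLemmas

section KSumLemmas

variable {V W : Type*} [DecidableEq W] {k : ℕ} (X : SimpleGraph V)
  (u : Fin k → V) (Y : SimpleGraph W) (w : Fin k → W)

private lemma kSum_adj_ll (hu : Function.Injective u) (hw : Function.Injective w) (a b : V) :
    (kSum X u Y w).Adj (Sum.inl a) (Sum.inl b) ↔
      X.Adj a b ∨ ∃ i j, a = u i ∧ b = u j ∧ Y.Adj (w i) (w j) := by
  rw [kSum, SimpleGraph.fromRel_adj]
  constructor
  · rintro ⟨hne, (h | ⟨i, j, h1, h2, h3⟩) | (h | ⟨i, j, h1, h2, h3⟩)⟩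
    · exact Or.inl h
    · exact Or.inr ⟨i, j, h1, h2, h3⟩
    · exact Or.inl h.symm
    · exact Or.inr ⟨j, i, h2, h1, h3.symm⟩
  · rintro (h | ⟨i, j, h1, h2, h3⟩)
    · exact ⟨by simpa using h.ne, Or.inl (Or.inl h)⟩
    · refine ⟨?_, Or.inl (Or.inr ⟨i, j, h1, h2, h3⟩)⟩
      simp only [ne_eq, Sum.inl.injEq]
      intro hab
      have hij : i = j := hu (h1.symm.trans (hab.trans h2))
      exact h3.ne (congrArg w hij)

private lemma kSum_adj_lr (a : V) (b : {x : W // ∀ i, x ≠ w i}) :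
    (kSum X u Y w).Adj (Sum.inl a) (Sum.inr b) ↔ ∃ i, a = u i ∧ Y.Adj (w i) b.1 := by
  rw [kSum, SimpleGraph.fromRel_adj]
  constructor
  · rintro ⟨hne, h | h⟩
    · exact h
    · exact h.elim
  · rintro ⟨i, hi, hy⟩
    exact ⟨by simp, Or.inl ⟨i, hi, hy⟩⟩

private lemma kSum_adj_rl (a : V) (b : {x : W // ∀ i, x ≠ w i}) :
    (kSum X u Y w).Adj (Sum.inr b) (Sum.inl a) ↔ ∃ i, a = u i ∧ Y.Adj (w i) b.1 := by
  rw [kSum, SimpleGraph.fromRel_adj]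
  constructor
  · rintro ⟨hne, h | h⟩
    · exact h.elim
    · exact h
  · rintro ⟨i, hi, hy⟩
    exact ⟨by simp, Or.inr ⟨i, hi, hy⟩⟩

private lemma kSum_adj_rr (a b : {x : W // ∀ i, x ≠ w i}) :
    (kSum X u Y w).Adj (Sum.inr a) (Sum.inr b) ↔ Y.Adj a.1 b.1 := by
  rw [kSum, SimpleGraph.fromRel_adj]
  constructor
  · rintro ⟨hne, h | h⟩
    · exact h
    · exact h.symm
  · intro h
    refine ⟨?_, Or.inl h⟩
    simp only [ne_eq, Sum.inr.injEq]
    intro hab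
    exact h.ne (congrArg Subtype.val hab)

variable [Fintype V] [Fintype W]

private lemma gdeg_kSum_not_mem (hu : Function.Injective u) (hw : Function.Injective w)
    (a : V) (ha : ∀ i, a ≠ u i) :
    gdeg (kSum X u Y w) (Sum.inl a) = gdeg X a := by
  rw [gdeg_eq, gdeg_eq, card_subtype_sum]
  have h2 : Nat.card {b : {x : W // ∀ i, x ≠ w i} // (kSum X u Y w).Adj (Sum.inl a) (Sum.inr b)}
      = 0 := by
    have : IsEmpty {b : {x : W // ∀ i, x ≠ w i} // (kSum X u Y w).Adj (Sum.inl a) (Sum.inr b)} := by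
      refine ⟨fun x => ?_⟩
      obtain ⟨i, hi, -⟩ := (kSum_adj_lr X u Y w a x.1).mp x.2
      exact ha i hi
    exact Nat.card_of_isEmpty
  rw [h2, add_zero]
  refine Nat.card_congr (Equiv.subtypeEquivRight fun b => ?_)
  rw [kSum_adj_ll X u Y w hu hw]
  constructor
  · rintro (h | ⟨i, j, h1, -, -⟩)
    · exact h
    · exact absurd h1 (ha i)
  · exact Or.inl

private lemma gdeg_kSum_mem (hu : Function.Injective u) (hw : Function.Injective w) (i : Fin k) :
    gdeg (kSum X u Y w) (Sum.inl (u i)) =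
      gdeg X (u i) + (Nat.card {j : Fin k // Y.Adj (w i) (w j) ∧ ¬ X.Adj (u i) (u j)}
        + Nat.card {b : {x : W // ∀ i, x ≠ w i} // Y.Adj (w i) b.1}) := by
  rw [gdeg_eq, card_subtype_sum, gdeg_eq]
  have hiff : ∀ b : V, (kSum X u Y w).Adj (Sum.inl (u i)) (Sum.inl b) ↔
      X.Adj (u i) b ∨ (∃ j, b = u j ∧ Y.Adj (w i) (w j)) := by
    intro b
    rw [kSum_adj_ll X u Y w hu hw]
    constructor
    · rintro (h | ⟨i', j, h1, h2, h3⟩)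
      · exact Or.inl h
      · exact Or.inr ⟨j, h2, by rwa [hu h1]⟩
    · rintro (h | ⟨j, h1, h2⟩)
      · exact Or.inl h
      · exact Or.inr ⟨i, j, rfl, h1, h2⟩
  have hl : Nat.card {b : V // (kSum X u Y w).Adj (Sum.inl (u i)) (Sum.inl b)} =
      Nat.card {b : V // X.Adj (u i) b} +
        Nat.card {j : Fin k // Y.Adj (w i) (w j) ∧ ¬ X.Adj (u i) (u j)} := by
    rw [Nat.card_congr (Equiv.subtypeEquivRight hiff), card_subtype_or]
    congr 1
    refine Nat.card_congr (Equiv.ofBijective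
      (fun j : {j : Fin k // Y.Adj (w i) (w j) ∧ ¬ X.Adj (u i) (u j)} =>
        (⟨u j.1, ⟨j.1, rfl, j.2.1⟩, j.2.2⟩ :
          {b : V // (∃ j, b = u j ∧ Y.Adj (w i) (w j)) ∧ ¬ X.Adj (u i) b}))
      ⟨?_, ?_⟩).symm
    · intro a b hab
      exact Subtype.ext (hu (congrArg Subtype.val hab))
    · rintro ⟨b, ⟨j, rfl, hy⟩, hna⟩
      exact ⟨⟨j, hy, hna⟩, rfl⟩
  have hr : Nat.card {b : {x : W // ∀ i, x ≠ w i} //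
      (kSum X u Y w).Adj (Sum.inl (u i)) (Sum.inr b)} =
      Nat.card {b : {x : W // ∀ i, x ≠ w i} // Y.Adj (w i) b.1} := by
    refine Nat.card_congr (Equiv.subtypeEquivRight fun b => ?_)
    rw [kSum_adj_lr X u Y w]
    constructor
    · rintro ⟨i', h1, h2⟩
      rwa [hu h1]
    · intro hb
      exact ⟨i, rfl, hb⟩
  rw [hl, hr, add_assoc]

private lemma gdeg_kSum_inr (hu : Function.Injective u) (hw : Function.Injective w)
    (b : {x : W // ∀ i, x ≠ w i}) :
    gdeg (kSum X u Y w) (Sum.inr b) =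
      Nat.card {i : Fin k // Y.Adj (w i) b.1} + Nat.card {x : {x : W // ∀ i, x ≠ w i} //
        Y.Adj b.1 x.1} := by
  rw [gdeg_eq, card_subtype_sum]
  congr 1
  · refine Nat.card_congr (Equiv.ofBijective
      (fun i : {i : Fin k // Y.Adj (w i) b.1} =>
        (⟨u i.1, (kSum_adj_rl X u Y w (u i.1) b).mpr ⟨i.1, rfl, i.2⟩⟩ :
          {x : V // (kSum X u Y w).Adj (Sum.inr b) (Sum.inl x)}))
      ⟨?_, ?_⟩).symm
    · intro a c hac
      exact Subtype.ext (hu (congrArg Subtype.val hac))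
    · rintro ⟨x, hx⟩
      obtain ⟨i, rfl, hy⟩ := (kSum_adj_rl X u Y w x b).mp hx
      exact ⟨⟨i, hy⟩, rfl⟩
  · refine Nat.card_congr (Equiv.subtypeEquivRight fun x => ?_)
    exact kSum_adj_rr X u Y w b x

end KSumLemmas

private lemma fromBlocks_submatrix_map {n o l m n' o' l' m' α : Type*}
    (A : Matrix n l α) (B : Matrix n m α) (C : Matrix o l α) (D : Matrix o m α)
    (f : n' → n) (g : o' → o) (f' : l' → l) (g' : m' → m) :
    (Matrix.fromBlocks A B C D).submatrix (Sum.map f g) (Sum.map f' g') =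
      Matrix.fromBlocks (A.submatrix f f') (B.submatrix f g')
        (C.submatrix g f') (D.submatrix g g') := by
  ext s t
  rcases s with a | a <;> rcases t with b | b <;> rfl

private lemma mul_support_right {α V : Type*} [Fintype V] [DecidableEq V] [Fintype α] {k : ℕ}
    (u : Fin k → V) (M' : Matrix V V ℝ) (C : ℝ)
    (hcol : ∀ (i : Fin k) (a : V), M' a (u i) = if a = u i then C else 0)
    (G : Matrix V α ℝ) (hG : ∀ x y, G x y ≠ 0 → ∃ i, x = u i) :
    M' * G = C • G := by
  ext a b
  rw [Matrix.mul_apply, Matrix.smul_apply, smul_eq_mul]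
  rw [Finset.sum_eq_single_of_mem a (Finset.mem_univ a)]
  · by_cases hg : G a b = 0
    · rw [hg, mul_zero, mul_zero]
    · obtain ⟨i, rfl⟩ := hG a b hg
      rw [hcol i (u i), if_pos rfl]
  · intro x _ hx
    by_cases hg : G x b = 0
    · rw [hg, mul_zero]
    · obtain ⟨i, hi⟩ := hG x b hg
      subst hi
      rw [hcol i a, if_neg (fun hc => hx hc.symm), zero_mul]

private lemma mul_support_left {α V : Type*} [Fintype V] [DecidableEq V] [Fintype α] {k : ℕ}
    (u : Fin k → V) (M' : Matrix V V ℝ) (C : ℝ)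
    (hrow : ∀ (i : Fin k) (b : V), M' (u i) b = if b = u i then C else 0)
    (G : Matrix α V ℝ) (hG : ∀ x y, G x y ≠ 0 → ∃ i, y = u i) :
    G * M' = C • G := by
  ext a b
  rw [Matrix.mul_apply, Matrix.smul_apply, smul_eq_mul]
  rw [Finset.sum_eq_single_of_mem b (Finset.mem_univ b)]
  · by_cases hg : G a b = 0
    · rw [hg, zero_mul, mul_zero]
    · obtain ⟨i, rfl⟩ := hG a b hg
      rw [hrow i (u i), if_pos rfl, mul_comm]
  · intro x _ hx
    by_cases hg : G a x = 0
    · rw [hg, zero_mul]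
    · obtain ⟨i, hi⟩ := hG a x hg
      subst hi
      rw [hrow i b, if_neg (fun hc => hx hc.symm), mul_zero]

/-- If `X₁` and `X₂` are degree similar, each `uᵢ` (resp. `vᵢ`) is the unique vertex of
its degree in `X₁` (resp. `X₂`), corresponding degrees agree, and `X₁[{u₁,…,u_k}]` is
connected, then the `k`-sums of `X₁` and `X₂` with `Y` along these vertices are
degree similar. -/
theorem degreeSimilar_kSum {V W : Type*} [Fintype V] [Fintype W]
    [DecidableEq V] [DecidableEq W] {k : ℕ}
    (X₁ X₂ : SimpleGraph V) (h : DegreeSimilar X₁ X₂)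
    (Y : SimpleGraph W) (w : Fin k → W) (hw : Function.Injective w)
    (u v : Fin k → V) (hu : Function.Injective u) (hv : Function.Injective v)
    (h1u : ∀ i, ∀ x : V, gdeg X₁ x = gdeg X₁ (u i) → x = u i)
    (h1v : ∀ i, ∀ x : V, gdeg X₂ x = gdeg X₂ (v i) → x = v i)
    (h2 : ∀ i, gdeg X₁ (u i) = gdeg X₂ (v i))
    (h3 : (X₁.induce (Set.range u)).Connected) :
    DegreeSimilar (kSum X₁ u Y w) (kSum X₂ v Y w) := by
  classical
  obtain ⟨e, M, hM, hA, hD⟩ := h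
  have hdet : IsUnit M.det := (Matrix.isUnit_iff_isUnit_det M).mp hM
  have hMl : M⁻¹ * M = 1 := Matrix.nonsing_inv_mul M hdet
  have hMr : M * M⁻¹ = 1 := Matrix.mul_nonsing_inv M hdet
  have hA' : adjMat X₁ * M = M * (adjMat X₂).submatrix ⇑e ⇑e := by
    calc adjMat X₁ * M = (M * M⁻¹) * adjMat X₁ * M := by rw [hMr, Matrix.one_mul]
    _ = M * (M⁻¹ * adjMat X₁ * M) := by rw [Matrix.mul_assoc, Matrix.mul_assoc, Matrix.mul_assoc]
    _ = M * ((adjMat X₂).submatrix ⇑e ⇑e) := by rw [hA]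
  have hD' : degMat X₁ * M = M * (degMat X₂).submatrix ⇑e ⇑e := by
    calc degMat X₁ * M = (M * M⁻¹) * degMat X₁ * M := by rw [hMr, Matrix.one_mul]
    _ = M * (M⁻¹ * degMat X₁ * M) := by rw [Matrix.mul_assoc, Matrix.mul_assoc, Matrix.mul_assoc]
    _ = M * ((degMat X₂).submatrix ⇑e ⇑e) := by rw [hD]
  have hdegMN : ∀ a b : V, M a b ≠ 0 → gdeg X₁ a = gdeg X₂ (e b) := by
    intro a b hab
    have h1 := congrFun (congrFun hD' a) b
    rw [show degMat X₁ = Matrix.diagonal fun x => (gdeg X₁ x : ℝ) from rfl,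
      Matrix.diagonal_mul, Matrix.mul_apply] at h1
    have h2' : ∀ x ∈ Finset.univ, x ≠ b → M a x * (degMat X₂).submatrix (⇑e) (⇑e) x b = 0 := by
      intro x _ hx
      have : (degMat X₂).submatrix (⇑e) (⇑e) x b = 0 := by
        simp only [Matrix.submatrix_apply, degMat]
        exact Matrix.diagonal_apply_ne _ (fun hc => hx (e.injective hc))
      rw [this, mul_zero]
    rw [Finset.sum_eq_single_of_mem b (Finset.mem_univ b) h2'] at h1
    simp only [degMat, Matrix.submatrix_apply, Matrix.diagonal_apply_eq] at h1
    have hcast : (gdeg X₁ a : ℝ) = gdeg X₂ (e b) := by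
      have := mul_right_cancel₀ hab (h1.trans (mul_comm _ _))
      exact this
    exact_mod_cast hcast
  set j : Fin k → V := fun i => e.symm (v i) with hjdef
  have hej : ∀ i, e (j i) = v i := fun i => e.apply_symm_apply (v i)
  have hcolM : ∀ i (a : V), a ≠ u i → M a (j i) = 0 := by
    intro i a hne
    by_contra h0
    have hd := hdegMN a (j i) h0
    rw [hej] at hd
    exact hne (h1u i a (hd.trans (h2 i).symm))
  have hrowM : ∀ i (b : V), b ≠ j i → M (u i) b = 0 := by
    intro i b hne
    by_contra h0
    have hd := hdegMN (u i) b h0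
    have hb : e b = v i := h1v i (e b) (hd.symm.trans (h2 i))
    exact hne (by rw [hjdef]; simp only [← hb, Equiv.symm_apply_apply])
  set c : Fin k → ℝ := fun i => M (u i) (j i) with hcdef
  have hc : ∀ i, c i ≠ 0 := by
    intro i h0
    have h1 := congrFun (congrFun hMl (j i)) (j i)
    rw [Matrix.mul_apply] at h1
    rw [Finset.sum_eq_single_of_mem (u i) (Finset.mem_univ (u i))
      (fun x _ hx => by rw [hcolM i x hx, mul_zero])] at h1
    rw [Matrix.one_apply_eq] at h1
    rw [show M (u i) (j i) = c i from rfl, h0, mul_zero] at h1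
    exact zero_ne_one h1
  have hrel : ∀ i l, adjMat X₁ (u i) (u l) * c l = c i * adjMat X₂ (v i) (v l) := by
    intro i l
    have h1 := congrFun (congrFun hA' (u i)) (j l)
    rw [Matrix.mul_apply, Matrix.mul_apply] at h1
    rw [Finset.sum_eq_single_of_mem (u l) (Finset.mem_univ (u l))
      (fun x _ hx => by rw [hcolM l x hx, mul_zero])] at h1
    rw [Finset.sum_eq_single_of_mem (j i) (Finset.mem_univ (j i))
      (fun x _ hx => by rw [hrowM i x hx, zero_mul])] at h1
    simpa only [Matrix.submatrix_apply, hej] using h1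
  have hadjuv : ∀ i l, X₁.Adj (u i) (u l) ↔ X₂.Adj (v i) (v l) := by
    intro i l
    have hr := hrel i l
    constructor
    · intro hx
      by_contra hx2
      simp only [adjMat, Matrix.of_apply, if_pos hx, if_neg hx2, one_mul, mul_zero] at hr
      exact hc l hr
    · intro hx
      by_contra hx1
      simp only [adjMat, Matrix.of_apply, if_neg hx1, if_pos hx, zero_mul, mul_one] at hr
      exact hc i hr.symm
  have hceq : ∀ i l, X₁.Adj (u i) (u l) → c i = c l := by
    intro i l hx
    have hr := hrel i l
    simp only [adjMat, Matrix.of_apply, if_pos hx, if_pos ((hadjuv i l).mp hx), one_mul,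
      mul_one] at hr
    exact hr.symm
  have hkey : ∀ (x y : ↥(Set.range u)) (p : (X₁.induce (Set.range u)).Walk x y)
      (i l : Fin k), u i = ↑x → u l = ↑y → c i = c l := by
    intro x y p
    induction p with
    | nil =>
      intro i l hi hl
      rw [hu (hi.trans hl.symm)]
    | @cons x x' y ha p ih =>
      intro i l hi hl
      obtain ⟨m, hm⟩ := x'.2
      have hadj1 : X₁.Adj (u i) (u m) := by
        have hxx : X₁.Adj ↑x ↑x' := by simpa using ha
        rwa [← hi, ← hm] at hxx
      exact (hceq i m hadj1).trans (ih m l hm hl)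
  have hcc : ∀ i l, c i = c l := by
    intro i l
    obtain ⟨p⟩ := h3.preconnected ⟨u i, ⟨i, rfl⟩⟩ ⟨u l, ⟨l, rfl⟩⟩
    exact hkey _ _ p i l rfl rfl
  obtain ⟨x0⟩ := h3.nonempty
  obtain ⟨i0, hi0⟩ := x0.2
  set C : ℝ := c i0 with hCdef
  have hC : C ≠ 0 := hc i0
  have hCc : ∀ i, c i = C := fun i => hcc i i0
  -- construct a permutation σ of V with σ (u i) = j i
  have hjinj : Function.Injective j := fun a b hab => hv (e.symm.injective hab)
  have hcardc : Fintype.card ↥(Set.range u)ᶜ = Fintype.card ↥(Set.range j)ᶜ := by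
    rw [Fintype.card_compl_set, Fintype.card_compl_set,
      Set.card_range_of_injective hu, Set.card_range_of_injective hjinj]
  set φ : ↥(Set.range u) ≃ ↥(Set.range j) :=
    (Equiv.ofInjective u hu).symm.trans (Equiv.ofInjective j hjinj) with hφdef
  set ψ : ↥(Set.range u)ᶜ ≃ ↥(Set.range j)ᶜ := Fintype.equivOfCardEq hcardc with hψdef
  set σ : V ≃ V := ((Equiv.Set.sumCompl (Set.range u)).symm.trans
    ((φ.sumCongr ψ).trans (Equiv.Set.sumCompl (Set.range j)))) with hσdef
  have hσu : ∀ i, σ (u i) = j i := by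
    intro i
    have hmem : u i ∈ Set.range u := ⟨i, rfl⟩
    have h1 : (Equiv.Set.sumCompl (Set.range u)).symm (u i) = Sum.inl ⟨u i, hmem⟩ :=
      Equiv.Set.sumCompl_symm_apply_of_mem hmem
    have hφi : φ ⟨u i, hmem⟩ = ⟨j i, ⟨i, rfl⟩⟩ := by
      have h2 : (Equiv.ofInjective u hu).symm ⟨u i, hmem⟩ = i := by
        rw [Equiv.symm_apply_eq]
        exact Subtype.ext rfl
      rw [hφdef, Equiv.trans_apply, h2]
      exact Subtype.ext rfl
    rw [hσdef]
    simp only [Equiv.trans_apply, h1, Equiv.sumCongr_apply, Sum.map_inl, hφi]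
    rfl
  set e' : V ≃ V := σ.trans e with he'def
  have he'u : ∀ i, e' (u i) = v i := by
    intro i
    show e (σ (u i)) = v i
    rw [hσu, hej]
  have he'iff : ∀ (i : Fin k) (x : V), e' x = v i ↔ x = u i := by
    intro i x
    constructor
    · intro hx
      exact e'.injective (hx.trans (he'u i).symm)
    · intro hx
      rw [hx, he'u]
  set M' : Matrix V V ℝ := Matrix.of fun a b => M a (σ b) with hM'def
  set invM' : Matrix V V ℝ := Matrix.of fun a b => M⁻¹ (σ a) b with hinvM'def
  have hM'l : invM' * M' = 1 := by
    ext a b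
    rw [Matrix.mul_apply]
    calc ∑ x, invM' a x * M' x b = ∑ x, M⁻¹ (σ a) x * M x (σ b) := rfl
    _ = (M⁻¹ * M) (σ a) (σ b) := (Matrix.mul_apply).symm
    _ = (1 : Matrix V V ℝ) (σ a) (σ b) := by rw [hMl]
    _ = (1 : Matrix V V ℝ) a b := by
        rw [Matrix.one_apply, Matrix.one_apply]
        simp [σ.injective.eq_iff]
  have hM'r : M' * invM' = 1 := by
    ext a b
    rw [Matrix.mul_apply]
    calc ∑ x, M' a x * invM' x b = ∑ x, M a (σ x) * M⁻¹ (σ x) b := rfl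
    _ = ∑ y, M a y * M⁻¹ y b := Equiv.sum_comp σ (fun y => M a y * M⁻¹ y b)
    _ = (M * M⁻¹) a b := (Matrix.mul_apply).symm
    _ = (1 : Matrix V V ℝ) a b := by rw [hMr]
  have hrowM' : ∀ (i : Fin k) (b : V), M' (u i) b = if b = u i then C else 0 := by
    intro i b
    show M (u i) (σ b) = _
    by_cases hb : b = u i
    · rw [if_pos hb, hb, hσu]
      exact hCc i
    · rw [if_neg hb]
      refine hrowM i (σ b) (fun hcon => hb ?_)
      exact σ.injective (hcon.trans (hσu i).symm)
  have hcolM' : ∀ (i : Fin k) (a : V), M' a (u i) = if a = u i then C else 0 := by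
    intro i a
    show M a (σ (u i)) = _
    rw [hσu]
    by_cases ha : a = u i
    · rw [if_pos ha, ha]
      exact hCc i
    · rw [if_neg ha]
      exact hcolM i a ha
  have hdegM' : ∀ a b : V, M' a b ≠ 0 → gdeg X₁ a = gdeg X₂ (e' b) :=
    fun a b h0 => hdegMN a (σ b) h0
  have hA'' : adjMat X₁ * M' = M' * (adjMat X₂).submatrix ⇑e' ⇑e' := by
    ext a b
    have hab := congrFun (congrFun hA' a) (σ b)
    rw [Matrix.mul_apply, Matrix.mul_apply] at hab
    rw [Matrix.mul_apply, Matrix.mul_apply]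
    calc ∑ x, adjMat X₁ a x * M' x b = ∑ x, adjMat X₁ a x * M x (σ b) := rfl
    _ = ∑ y, M a y * (adjMat X₂).submatrix ⇑e ⇑e y (σ b) := hab
    _ = ∑ x, M a (σ x) * (adjMat X₂).submatrix ⇑e ⇑e (σ x) (σ b) :=
        (Equiv.sum_comp σ (fun y => M a y * (adjMat X₂).submatrix ⇑e ⇑e y (σ b))).symm
    _ = ∑ x, M' a x * (adjMat X₂).submatrix ⇑e' ⇑e' x b := rfl
  -- block matrices
  set E₁ : Matrix V V ℝ := Matrix.of fun a b =>
    if (∃ i j, a = u i ∧ b = u j ∧ Y.Adj (w i) (w j)) ∧ ¬ X₁.Adj a b then 1 else 0 with hE₁def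
  set E₂ : Matrix V V ℝ := Matrix.of fun a b =>
    if (∃ i j, a = v i ∧ b = v j ∧ Y.Adj (w i) (w j)) ∧ ¬ X₂.Adj a b then 1 else 0 with hE₂def
  set Cm₁ : Matrix V {x : W // ∀ i, x ≠ w i} ℝ := Matrix.of fun a b =>
    if ∃ i, a = u i ∧ Y.Adj (w i) b.1 then 1 else 0 with hCm₁def
  set Cm₂ : Matrix V {x : W // ∀ i, x ≠ w i} ℝ := Matrix.of fun a b =>
    if ∃ i, a = v i ∧ Y.Adj (w i) b.1 then 1 else 0 with hCm₂def
  set Cm₁t : Matrix {x : W // ∀ i, x ≠ w i} V ℝ := Matrix.of fun b a =>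
    if ∃ i, a = u i ∧ Y.Adj (w i) b.1 then 1 else 0 with hCm₁tdef
  set Cm₂t : Matrix {x : W // ∀ i, x ≠ w i} V ℝ := Matrix.of fun b a =>
    if ∃ i, a = v i ∧ Y.Adj (w i) b.1 then 1 else 0 with hCm₂tdef
  set R : Matrix {x : W // ∀ i, x ≠ w i} {x : W // ∀ i, x ≠ w i} ℝ := Matrix.of fun a b =>
    if Y.Adj a.1 b.1 then 1 else 0 with hRdef
  have hAΓ₁blocks : adjMat (kSum X₁ u Y w) = Matrix.fromBlocks (adjMat X₁ + E₁) Cm₁ Cm₁t R := by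
    ext s t
    rcases s with a | a <;> rcases t with b | b
    · show (if (kSum X₁ u Y w).Adj (Sum.inl a) (Sum.inl b) then (1:ℝ) else 0)
        = (adjMat X₁ + E₁) a b
      rw [if_congr (kSum_adj_ll X₁ u Y w hu hw a b) rfl rfl, Matrix.add_apply, hE₁def]
      by_cases h1 : X₁.Adj a b
      · simp [adjMat, h1]
      · by_cases hq : ∃ i j, a = u i ∧ b = u j ∧ Y.Adj (w i) (w j)
        · simp [adjMat, h1, hq]
        · simp [adjMat, h1, hq]
    · show (if (kSum X₁ u Y w).Adj (Sum.inl a) (Sum.inr b) then (1:ℝ) else 0) = Cm₁ a b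
      rw [if_congr (kSum_adj_lr X₁ u Y w a b) rfl rfl, hCm₁def]
      rfl
    · show (if (kSum X₁ u Y w).Adj (Sum.inr a) (Sum.inl b) then (1:ℝ) else 0) = Cm₁t a b
      rw [if_congr (kSum_adj_rl X₁ u Y w b a) rfl rfl, hCm₁tdef]
      rfl
    · show (if (kSum X₁ u Y w).Adj (Sum.inr a) (Sum.inr b) then (1:ℝ) else 0) = R a b
      rw [if_congr (kSum_adj_rr X₁ u Y w a b) rfl rfl, hRdef]
      rfl
  have hAΓ₂blocks : adjMat (kSum X₂ v Y w) = Matrix.fromBlocks (adjMat X₂ + E₂) Cm₂ Cm₂t R := by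
    ext s t
    rcases s with a | a <;> rcases t with b | b
    · show (if (kSum X₂ v Y w).Adj (Sum.inl a) (Sum.inl b) then (1:ℝ) else 0)
        = (adjMat X₂ + E₂) a b
      rw [if_congr (kSum_adj_ll X₂ v Y w hv hw a b) rfl rfl, Matrix.add_apply, hE₂def]
      by_cases h1 : X₂.Adj a b
      · simp [adjMat, h1]
      · by_cases hq : ∃ i j, a = v i ∧ b = v j ∧ Y.Adj (w i) (w j)
        · simp [adjMat, h1, hq]
        · simp [adjMat, h1, hq]
    · show (if (kSum X₂ v Y w).Adj (Sum.inl a) (Sum.inr b) then (1:ℝ) else 0) = Cm₂ a b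
      rw [if_congr (kSum_adj_lr X₂ v Y w a b) rfl rfl, hCm₂def]
      rfl
    · show (if (kSum X₂ v Y w).Adj (Sum.inr a) (Sum.inl b) then (1:ℝ) else 0) = Cm₂t a b
      rw [if_congr (kSum_adj_rl X₂ v Y w b a) rfl rfl, hCm₂tdef]
      rfl
    · show (if (kSum X₂ v Y w).Adj (Sum.inr a) (Sum.inr b) then (1:ℝ) else 0) = R a b
      rw [if_congr (kSum_adj_rr X₂ v Y w a b) rfl rfl, hRdef]
      rfl
  have hsub_E : E₂.submatrix ⇑e' ⇑e' = E₁ := by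
    ext a b
    rw [Matrix.submatrix_apply, hE₂def, hE₁def]
    simp only [Matrix.of_apply]
    refine if_congr ?_ rfl rfl
    constructor
    · rintro ⟨⟨i, jj, hi, hj, hy⟩, hna⟩
      have hai : a = u i := (he'iff i a).mp hi
      have hbj : b = u jj := (he'iff jj b).mp hj
      refine ⟨⟨i, jj, hai, hbj, hy⟩, fun hx => hna ?_⟩
      rw [hi, hj]
      exact (hadjuv i jj).mp (by rwa [hai, hbj] at hx)
    · rintro ⟨⟨i, jj, hai, hbj, hy⟩, hna⟩
      refine ⟨⟨i, jj, (he'iff i a).mpr hai, (he'iff jj b).mpr hbj, hy⟩, fun hx => hna ?_⟩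
      rw [hai, hbj]
      refine (hadjuv i jj).mpr ?_
      rwa [(he'iff i a).mpr hai, (he'iff jj b).mpr hbj] at hx
  have hsub_Cm : Cm₂.submatrix ⇑e' id = Cm₁ := by
    ext a b
    rw [Matrix.submatrix_apply, hCm₂def, hCm₁def]
    simp only [Matrix.of_apply, id]
    exact if_congr (exists_congr fun i => and_congr_left fun _ => he'iff i a) rfl rfl
  have hsub_Cmt : Cm₂t.submatrix id ⇑e' = Cm₁t := by
    ext b a
    rw [Matrix.submatrix_apply, hCm₂tdef, hCm₁tdef]
    simp only [Matrix.of_apply, id]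
    exact if_congr (exists_congr fun i => and_congr_left fun _ => he'iff i a) rfl rfl
  set eh : (V ⊕ {x : W // ∀ i, x ≠ w i}) ≃ (V ⊕ {x : W // ∀ i, x ≠ w i}) :=
    Equiv.sumCongr e' (Equiv.refl _) with hehdef
  have h_adj_sub : (adjMat (kSum X₂ v Y w)).submatrix ⇑eh ⇑eh =
      Matrix.fromBlocks ((adjMat X₂).submatrix ⇑e' ⇑e' + E₁) Cm₁ Cm₁t R := by
    rw [hAΓ₂blocks]
    have hehcoe : ⇑eh = Sum.map ⇑e' (id : {x : W // ∀ i, x ≠ w i} → _) := rfl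
    rw [hehcoe, fromBlocks_submatrix_map]
    have hadd : (adjMat X₂ + E₂).submatrix ⇑e' ⇑e' =
        (adjMat X₂).submatrix ⇑e' ⇑e' + E₂.submatrix ⇑e' ⇑e' := by
      ext a b
      simp [Matrix.submatrix_apply, Matrix.add_apply]
    rw [hadd, hsub_E, hsub_Cm, hsub_Cmt, Matrix.submatrix_id_id]
  have hE₁supl : ∀ x y, E₁ x y ≠ 0 → ∃ i, x = u i := by
    intro x y h0
    rw [hE₁def] at h0
    simp only [Matrix.of_apply] at h0
    by_cases hcond : (∃ i j, x = u i ∧ y = u j ∧ Y.Adj (w i) (w j)) ∧ ¬ X₁.Adj x y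
    · obtain ⟨⟨i, jj, hi, hj, hy⟩, -⟩ := hcond
      exact ⟨i, hi⟩
    · exact absurd (if_neg hcond) h0
  have hE₁supr : ∀ x y, E₁ x y ≠ 0 → ∃ i, y = u i := by
    intro x y h0
    rw [hE₁def] at h0
    simp only [Matrix.of_apply] at h0
    by_cases hcond : (∃ i j, x = u i ∧ y = u j ∧ Y.Adj (w i) (w j)) ∧ ¬ X₁.Adj x y
    · obtain ⟨⟨i, jj, hi, hj, hy⟩, -⟩ := hcond
      exact ⟨jj, hj⟩
    · exact absurd (if_neg hcond) h0
  have hCm₁sup : ∀ x y, Cm₁ x y ≠ 0 → ∃ i, x = u i := by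
    intro x y h0
    rw [hCm₁def] at h0
    simp only [Matrix.of_apply] at h0
    by_cases hcond : ∃ i, x = u i ∧ Y.Adj (w i) y.1
    · obtain ⟨i, hi, -⟩ := hcond
      exact ⟨i, hi⟩
    · exact absurd (if_neg hcond) h0
  have hCm₁tsup : ∀ x y, Cm₁t x y ≠ 0 → ∃ i, y = u i := by
    intro x y h0
    rw [hCm₁tdef] at h0
    simp only [Matrix.of_apply] at h0
    by_cases hcond : ∃ i, y = u i ∧ Y.Adj (w i) x.1
    · obtain ⟨i, hi, -⟩ := hcond
      exact ⟨i, hi⟩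
    · exact absurd (if_neg hcond) h0
  have hEM' : E₁ * M' = C • E₁ := mul_support_left u M' C hrowM' E₁ hE₁supr
  have hM'E : M' * E₁ = C • E₁ := mul_support_right u M' C hcolM' E₁ hE₁supl
  have hM'Cm : M' * Cm₁ = C • Cm₁ := mul_support_right u M' C hcolM' Cm₁ hCm₁sup
  have hCmtM' : Cm₁t * M' = C • Cm₁t := mul_support_left u M' C hrowM' Cm₁t hCm₁tsup
  set N : Matrix (V ⊕ {x : W // ∀ i, x ≠ w i}) (V ⊕ {x : W // ∀ i, x ≠ w i}) ℝ :=
    Matrix.fromBlocks M' 0 0 (C • (1 : Matrix {x : W // ∀ i, x ≠ w i}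
      {x : W // ∀ i, x ≠ w i} ℝ)) with hNdef
  set N' : Matrix (V ⊕ {x : W // ∀ i, x ≠ w i}) (V ⊕ {x : W // ∀ i, x ≠ w i}) ℝ :=
    Matrix.fromBlocks invM' 0 0 (C⁻¹ • (1 : Matrix {x : W // ∀ i, x ≠ w i}
      {x : W // ∀ i, x ≠ w i} ℝ)) with hN'def
  have hNl' : N' * N = 1 := by
    rw [hNdef, hN'def, Matrix.fromBlocks_multiply]
    rw [hM'l]
    simp only [Matrix.mul_zero, Matrix.zero_mul, add_zero, zero_add, Matrix.smul_mul,
      Matrix.mul_smul, smul_smul, smul_zero, inv_mul_cancel₀ hC, mul_inv_cancel₀ hC,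
      one_smul, Matrix.one_mul, Matrix.mul_one]
    exact Matrix.fromBlocks_one
  have hNr' : N * N' = 1 := by
    rw [hNdef, hN'def, Matrix.fromBlocks_multiply]
    rw [hM'r]
    simp only [Matrix.mul_zero, Matrix.zero_mul, add_zero, zero_add, Matrix.smul_mul,
      Matrix.mul_smul, smul_smul, smul_zero, mul_inv_cancel₀ hC, inv_mul_cancel₀ hC,
      one_smul, Matrix.one_mul, Matrix.mul_one]
    exact Matrix.fromBlocks_one
  have hAint : adjMat (kSum X₁ u Y w) * N = N * (adjMat (kSum X₂ v Y w)).submatrix ⇑eh ⇑eh := by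
    rw [hAΓ₁blocks, h_adj_sub, hNdef, Matrix.fromBlocks_multiply, Matrix.fromBlocks_multiply]
    simp only [Matrix.mul_zero, Matrix.zero_mul, add_zero, zero_add, Matrix.add_mul,
      Matrix.mul_add, Matrix.mul_smul, Matrix.smul_mul, Matrix.mul_one, Matrix.one_mul,
      hA'', hEM', hM'E, hM'Cm, hCmtM']
  have hdeg : ∀ s t, N s t ≠ 0 →
      gdeg (kSum X₁ u Y w) s = gdeg (kSum X₂ v Y w) (eh t) := by
    intro s t hN0
    rcases s with a | a <;> rcases t with b | b
    · have hM0 : M' a b ≠ 0 := by rwa [hNdef, Matrix.fromBlocks_apply₁₁] at hN0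
      have heht : eh (Sum.inl b) = Sum.inl (e' b) := rfl
      rw [heht]
      by_cases ha : ∃ i, a = u i
      · obtain ⟨i, rfl⟩ := ha
        have hb : b = u i := by
          by_contra hb
          exact hM0 (by rw [hrowM' i b, if_neg hb])
        subst hb
        rw [he'u i]
        rw [gdeg_kSum_mem X₁ u Y w hu hw i, gdeg_kSum_mem X₂ v Y w hv hw i, h2 i]
        have e2 : Nat.card {jj : Fin k // Y.Adj (w i) (w jj) ∧ ¬ X₁.Adj (u i) (u jj)} =
            Nat.card {jj : Fin k // Y.Adj (w i) (w jj) ∧ ¬ X₂.Adj (v i) (v jj)} :=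
          Nat.card_congr (Equiv.subtypeEquivRight fun jj =>
            and_congr_right fun _ => not_congr (hadjuv i jj))
        rw [e2]
      · push_neg at ha
        have hb : ∀ i, e' b ≠ v i := by
          intro i hcon
          have hbu : b = u i := (he'iff i b).mp hcon
          exact hM0 (by rw [hbu, hcolM' i a, if_neg (ha i)])
        rw [gdeg_kSum_not_mem X₁ u Y w hu hw a ha,
          gdeg_kSum_not_mem X₂ v Y w hv hw (e' b) hb]
        exact hdegM' a b hM0
    · exact absurd (show N (Sum.inl a) (Sum.inr b) = 0 by
        rw [hNdef, Matrix.fromBlocks_apply₁₂]; rfl) hN0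
    · exact absurd (show N (Sum.inr a) (Sum.inl b) = 0 by
        rw [hNdef, Matrix.fromBlocks_apply₂₁]; rfl) hN0
    · have hab : a = b := by
        by_contra hab
        refine hN0 ?_
        rw [hNdef, Matrix.fromBlocks_apply₂₂, Matrix.smul_apply, Matrix.one_apply_ne hab,
          smul_zero]
      subst hab
      have heht : eh (Sum.inr a) = Sum.inr a := rfl
      rw [heht, gdeg_kSum_inr X₁ u Y w hu hw a, gdeg_kSum_inr X₂ v Y w hv hw a]
  have hDint : degMat (kSum X₁ u Y w) * N = N * (degMat (kSum X₂ v Y w)).submatrix ⇑eh ⇑eh := by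
    ext s t
    rw [show degMat (kSum X₁ u Y w)
      = Matrix.diagonal (fun s => ((gdeg (kSum X₁ u Y w) s : ℝ))) from rfl,
      Matrix.diagonal_mul, Matrix.mul_apply]
    have hzero : ∀ x ∈ Finset.univ, x ≠ t →
        N s x * (degMat (kSum X₂ v Y w)).submatrix ⇑eh ⇑eh x t = 0 := by
      intro x _ hx
      have hz : (degMat (kSum X₂ v Y w)).submatrix ⇑eh ⇑eh x t = 0 := by
        simp only [Matrix.submatrix_apply, degMat]
        exact Matrix.diagonal_apply_ne _ (fun hcon => hx (eh.injective hcon))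
      rw [hz, mul_zero]
    rw [Finset.sum_eq_single_of_mem t (Finset.mem_univ t) hzero]
    simp only [Matrix.submatrix_apply, degMat, Matrix.diagonal_apply_eq]
    by_cases hN0 : N s t = 0
    · rw [hN0, mul_zero, zero_mul]
    · rw [hdeg s t hN0, mul_comm]
  exact ⟨eh, N, ⟨⟨N, N', hNr', hNl'⟩, rfl⟩,
    by rw [Matrix.inv_eq_left_inv hNl', Matrix.mul_assoc, hAint, ← Matrix.mul_assoc, hNl',
      Matrix.one_mul],
    by rw [Matrix.inv_eq_left_inv hNl', Matrix.mul_assoc, hDint, ← Matrix.mul_assoc, hNl',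
      Matrix.one_mul]⟩
end

section
/- Let X₁ and X₂ be degree-similar finite simple graphs with X₁ connected, let d₁,…,d_k be the distinct vertex degrees occurring in X₁, and for each j let V_j^{(i)} = {v ∈ V(Xᵢ) : deg_{Xᵢ}(v) = d_j} and n_j := |V_j^{(1)}|. Fix l with l ≤ k. For i ∈ {1,2} let Γᵢ be the graph obtained from Xᵢ by, for each j ∈ {1,…,l}, adding n_j new vertices and joining each of them to every vertex of V_j^{(i)} (the new vertices are pairwise nonadjacent, including between different values of j). Then Γ₁ and Γ₂ are degree similar. -/
open Matrix

/-- The graph obtained from `X` by adding, for each `j : Fin l`, a set of `N j` new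
vertices, each joined to every vertex of `X` of degree `dd j`; the new vertices are
pairwise nonadjacent. -/
def addDominators {V : Type*} (X : SimpleGraph V) {l : ℕ} (dd : Fin l → ℕ)
    (N : Fin l → ℕ) : SimpleGraph (V ⊕ Σ j : Fin l, Fin (N j)) :=
  SimpleGraph.fromRel fun a b =>
    match a, b with
    | Sum.inl a, Sum.inl b => X.Adj a b
    | Sum.inl a, Sum.inr b => gdeg X a = dd b.1
    | _, _ => False

section Aux

variable {V : Type*} {l : ℕ} {X : SimpleGraph V} {dd N : Fin l → ℕ}

lemma addDom_adj_inl_inl {a b : V} :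
    (addDominators X dd N).Adj (Sum.inl a) (Sum.inl b) ↔ X.Adj a b := by
  simp only [addDominators, SimpleGraph.fromRel_adj, ne_eq, Sum.inl.injEq]
  constructor
  · rintro ⟨h, h1 | h1⟩
    · exact h1
    · exact h1.symm
  · intro h; exact ⟨fun he => X.irrefl (he ▸ h), Or.inl h⟩

lemma addDom_adj_inl_inr {a : V} {b : Σ j : Fin l, Fin (N j)} :
    (addDominators X dd N).Adj (Sum.inl a) (Sum.inr b) ↔ gdeg X a = dd b.1 := by
  simp [addDominators, SimpleGraph.fromRel_adj]

lemma addDom_adj_inr_inl {a : V} {b : Σ j : Fin l, Fin (N j)} :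
    (addDominators X dd N).Adj (Sum.inr b) (Sum.inl a) ↔ gdeg X a = dd b.1 := by
  rw [SimpleGraph.adj_comm]; exact addDom_adj_inl_inr

lemma addDom_adj_inr_inr {a b : Σ j : Fin l, Fin (N j)} :
    ¬ (addDominators X dd N).Adj (Sum.inr a) (Sum.inr b) := by
  simp [addDominators, SimpleGraph.fromRel_adj]

lemma gdeg_addDom_inl [Finite V] (v : V) :
    gdeg (addDominators X dd N) (Sum.inl v)
      = gdeg X v + Nat.card {b : Σ j : Fin l, Fin (N j) // gdeg X v = dd b.1} := by
  have e0 : ((addDominators X dd N).neighborSet (Sum.inl v)) ≃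
      (X.neighborSet v) ⊕ {b : Σ j : Fin l, Fin (N j) // gdeg X v = dd b.1} :=
    Equiv.subtypeSum.trans
      (Equiv.sumCongr (Equiv.subtypeEquivRight fun a => addDom_adj_inl_inl (X := X) (dd := dd) (N := N))
        (Equiv.subtypeEquivRight fun b => addDom_adj_inl_inr (X := X) (dd := dd) (N := N)))
  rw [gdeg, Nat.card_congr e0, Nat.card_sum, gdeg]

lemma gdeg_addDom_inr [Finite V] (b : Σ j : Fin l, Fin (N j)) :
    gdeg (addDominators X dd N) (Sum.inr b)
      = Nat.card {w : V // gdeg X w = dd b.1} := by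
  have e0 : ((addDominators X dd N).neighborSet (Sum.inr b)) ≃
      {w : V // gdeg X w = dd b.1} ⊕ {b' : Σ j : Fin l, Fin (N j) // False} :=
    Equiv.subtypeSum.trans
      (Equiv.sumCongr (Equiv.subtypeEquivRight fun a => addDom_adj_inr_inl (X := X) (dd := dd) (N := N))
        (Equiv.subtypeEquivRight fun b' => iff_false_intro (addDom_adj_inr_inr (X := X) (dd := dd) (N := N))))
  rw [gdeg, Nat.card_congr e0, Nat.card_sum]
  simp

open Classical in
noncomputable def Bmat (X : SimpleGraph V) (dd : Fin l → ℕ) (N : Fin l → ℕ) :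
    Matrix V (Σ j : Fin l, Fin (N j)) ℝ :=
  Matrix.of fun v b => if gdeg X v = dd b.1 then 1 else 0

lemma adjMat_addDom :
    adjMat (addDominators X dd N)
      = Matrix.fromBlocks (adjMat X) (Bmat X dd N) (Bmat X dd N)ᵀ 0 := by
  ext (i | i) (j | j)
  · by_cases h : X.Adj i j <;>
      simp [adjMat, Bmat, addDom_adj_inl_inl, h]
  · by_cases h : gdeg X i = dd j.1 <;>
      simp [adjMat, Bmat, addDom_adj_inl_inr, h]
  · by_cases h : gdeg X j = dd i.1 <;>
      simp [adjMat, Bmat, addDom_adj_inr_inl, h]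
  · simp [adjMat, addDom_adj_inr_inr]

lemma degMat_sum_type {W S : Type*} [DecidableEq W] [DecidableEq S]
    (G : SimpleGraph (W ⊕ S)) :
    degMat G = Matrix.fromBlocks
      (Matrix.diagonal fun a => (gdeg G (Sum.inl a) : ℝ)) 0 0
      (Matrix.diagonal fun b => (gdeg G (Sum.inr b) : ℝ)) := by
  ext (i | i) (j | j) <;>
    simp [degMat, Matrix.diagonal_apply]

lemma fromBlocks_submatrix {α n m n' m' p q : Type*} (A : Matrix n m α) (B : Matrix n m' α)
    (C : Matrix n' m α) (D : Matrix n' m' α) (f : p → n) (g : q → n') (f' : p → m)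
    (g' : q → m') :
    (Matrix.fromBlocks A B C D).submatrix (Sum.map f g) (Sum.map f' g')
      = Matrix.fromBlocks (A.submatrix f f') (B.submatrix f g')
          (C.submatrix g f') (D.submatrix g g') := by
  ext (i | i) (j | j) <;> rfl

lemma conj_helper {n : Type*} [Fintype n] [DecidableEq n] {M X Y : Matrix n n ℝ}
    (hM : IsUnit M) (hXY : X * M = M * Y) : M⁻¹ * X * M = Y := by
  have hd : IsUnit M.det := (Matrix.isUnit_iff_isUnit_det M).mp hM
  rw [mul_assoc, hXY, ← mul_assoc, Matrix.nonsing_inv_mul M hd, one_mul]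

lemma conj_helper' {n : Type*} [Fintype n] [DecidableEq n] {M X Y : Matrix n n ℝ}
    (hM : IsUnit M) (hXY : M⁻¹ * X * M = Y) : X * M = M * Y := by
  have hd : IsUnit M.det := (Matrix.isUnit_iff_isUnit_det M).mp hM
  rw [← hXY, ← mul_assoc, ← mul_assoc, Matrix.mul_nonsing_inv M hd, one_mul]

lemma gdeg_eq_degree {W : Type*} [Fintype W] (G : SimpleGraph W) [DecidableRel G.Adj] (v : W) :
    gdeg G v = G.degree v := by
  rw [gdeg, Nat.card_eq_fintype_card, SimpleGraph.card_neighborSet_eq_degree]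

lemma degMat_sub_adjMat {W : Type*} [Fintype W] [DecidableEq W] (G : SimpleGraph W)
    [DecidableRel G.Adj] : degMat G - adjMat G = G.lapMatrix ℝ := by
  ext a b
  by_cases hab : G.Adj a b <;>
    by_cases h : a = b <;>
      simp [degMat, adjMat, SimpleGraph.lapMatrix, SimpleGraph.degMatrix,
        Matrix.diagonal_apply, gdeg_eq_degree, h, hab]

end Aux


/-- Let `X₁, X₂` be degree similar with `X₁` connected, let `d 0, …, d (k-1)` be the
distinct degrees occurring in `X₁`, with `n j` vertices of degree `d j` in `X₁`, and
fix `l ≤ k`.  Adding, for each `j < l`, a set of `n j` new vertices joined to all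
vertices of degree `d j` (in `X₁` for `Γ₁`, in `X₂` for `Γ₂`) yields degree-similar
graphs. -/
theorem degreeSimilar_addDominators {V : Type*} [Fintype V] [DecidableEq V] {k : ℕ}
    (X₁ X₂ : SimpleGraph V) (hconn : X₁.Connected) (h : DegreeSimilar X₁ X₂)
    (d : Fin k → ℕ) (hinj : Function.Injective d)
    (hall : ∀ x : V, ∃ j, gdeg X₁ x = d j)
    (hocc : ∀ j, ∃ x : V, gdeg X₁ x = d j)
    (l : ℕ) (hl : l ≤ k) :
    DegreeSimilar
      (addDominators X₁ (fun j => d (Fin.castLE hl j))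
        (fun j => Nat.card {x : V // gdeg X₁ x = d (Fin.castLE hl j)}))
      (addDominators X₂ (fun j => d (Fin.castLE hl j))
        (fun j => Nat.card {x : V // gdeg X₁ x = d (Fin.castLE hl j)})) := by
  classical
  obtain ⟨e, M, hM, hA, hD⟩ := h
  have hd : IsUnit M.det := (Matrix.isUnit_iff_isUnit_det M).mp hM
  set dd : Fin l → ℕ := fun j => d (Fin.castLE hl j) with hdddef
  set N : Fin l → ℕ := fun j => Nat.card {x : V // gdeg X₁ x = d (Fin.castLE hl j)} with hNdef
  obtain ⟨v₀⟩ := hconn.nonempty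
  have hDM : degMat X₁ * M = M * (degMat X₂).submatrix ⇑e ⇑e := conj_helper' hM hD
  have hAM : adjMat X₁ * M = M * (adjMat X₂).submatrix ⇑e ⇑e := conj_helper' hM hA
  -- zero pattern
  have hzero : ∀ u v, M u v ≠ 0 → gdeg X₁ u = gdeg X₂ (e v) := by
    intro u v hne
    have h3 : (degMat X₁ * M) u v = (M * (degMat X₂).submatrix ⇑e ⇑e) u v := by rw [hDM]
    have h2 : (gdeg X₁ u : ℝ) * M u v = M u v * (gdeg X₂ (e v) : ℝ) := by
      simpa [degMat, Matrix.submatrix_diagonal_equiv, Matrix.diagonal_mul,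
        Matrix.mul_diagonal] using h3
    have h4 : (gdeg X₁ u : ℝ) = (gdeg X₂ (e v) : ℝ) :=
      mul_right_cancel₀ hne (by rw [h2, mul_comm])
    exact_mod_cast h4
  -- Laplacian and constant vectors
  have hLM : X₁.lapMatrix ℝ * M = M * (X₂.lapMatrix ℝ).submatrix ⇑e ⇑e := by
    have h1 : (degMat X₁ - adjMat X₁) * M
        = M * ((degMat X₂ - adjMat X₂).submatrix ⇑e ⇑e) := by
      rw [Matrix.sub_mul, hDM, hAM, ← Matrix.mul_sub]
      rfl
    rwa [degMat_sub_adjMat, degMat_sub_adjMat] at h1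
  set o : V → ℝ := fun _ => 1 with hodef
  have hL1 : X₁.lapMatrix ℝ *ᵥ o = 0 := X₁.lapMatrix_mulVec_const_eq_zero
  have hL2 : (X₂.lapMatrix ℝ).submatrix ⇑e ⇑e *ᵥ o = 0 := by
    rw [Matrix.submatrix_mulVec_equiv]
    have h1 : (o ∘ ⇑e.symm) = (fun _ => 1 : V → ℝ) := rfl
    rw [h1, X₂.lapMatrix_mulVec_const_eq_zero]
    rfl
  have hker : ∀ x : V → ℝ, X₁.lapMatrix ℝ *ᵥ x = 0 → ∀ u w : V, x u = x w := by
    intro x hx u w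
    exact (X₁.lapMatrix_mulVec_eq_zero_iff_forall_reachable).mp
      hx u w (hconn.preconnected u w)
  have hMo0 : X₁.lapMatrix ℝ *ᵥ (M *ᵥ o) = 0 := by
    rw [Matrix.mulVec_mulVec, hLM, ← Matrix.mulVec_mulVec, hL2, Matrix.mulVec_zero]
  set c : ℝ := (M *ᵥ o) v₀ with hcdef
  have hrowv : M *ᵥ o = c • o := by
    funext v
    have h5 := hker _ hMo0 v v₀
    simpa [hodef] using h5
  have hc0 : c ≠ 0 := by
    intro h0
    have h1 : M *ᵥ o = 0 := by rw [hrowv, h0, zero_smul]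
    have h2 : M⁻¹ *ᵥ (M *ᵥ o) = 0 := by rw [h1, Matrix.mulVec_zero]
    rw [Matrix.mulVec_mulVec, Matrix.nonsing_inv_mul M hd, Matrix.one_mulVec] at h2
    exact one_ne_zero (congrFun h2 v₀)
  have hMinvo : M⁻¹ *ᵥ o = c⁻¹ • o := by
    have h1 : M⁻¹ *ᵥ (M *ᵥ o) = o := by
      rw [Matrix.mulVec_mulVec, Matrix.nonsing_inv_mul M hd, Matrix.one_mulVec]
    rw [hrowv, Matrix.mulVec_smul] at h1
    calc M⁻¹ *ᵥ o = c⁻¹ • (c • (M⁻¹ *ᵥ o)) := by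
            rw [smul_smul, inv_mul_cancel₀ hc0, one_smul]
      _ = c⁻¹ • o := by rw [h1]
  -- transpose
  have hL1symm : (X₁.lapMatrix ℝ)ᵀ = X₁.lapMatrix ℝ := by
    rw [SimpleGraph.lapMatrix, Matrix.transpose_sub, SimpleGraph.degMatrix,
      Matrix.diagonal_transpose, SimpleGraph.transpose_adjMatrix]
  have hL2symm : (X₂.lapMatrix ℝ)ᵀ = X₂.lapMatrix ℝ := by
    rw [SimpleGraph.lapMatrix, Matrix.transpose_sub, SimpleGraph.degMatrix,
      Matrix.diagonal_transpose, SimpleGraph.transpose_adjMatrix]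
  have hMT : Mᵀ * X₁.lapMatrix ℝ = (X₂.lapMatrix ℝ).submatrix ⇑e ⇑e * Mᵀ := by
    have h1 := congrArg Matrix.transpose hLM
    rwa [Matrix.transpose_mul, Matrix.transpose_mul, hL1symm,
      Matrix.transpose_submatrix, hL2symm] at h1
  have hyk : (X₂.lapMatrix ℝ).submatrix ⇑e ⇑e *ᵥ (Mᵀ *ᵥ o) = 0 := by
    rw [Matrix.mulVec_mulVec, ← hMT, ← Matrix.mulVec_mulVec, hL1, Matrix.mulVec_zero]
  have hMy0 : X₁.lapMatrix ℝ *ᵥ (M *ᵥ (Mᵀ *ᵥ o)) = 0 := by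
    rw [Matrix.mulVec_mulVec (v := Mᵀ *ᵥ o), hLM, ← Matrix.mulVec_mulVec, hyk,
      Matrix.mulVec_zero]
  set a : ℝ := (M *ᵥ (Mᵀ *ᵥ o)) v₀ with hadef
  have hMy : M *ᵥ (Mᵀ *ᵥ o) = a • o := by
    funext v
    have h5 := hker _ hMy0 v v₀
    simpa [hadef, hodef] using h5
  have hcolv : Mᵀ *ᵥ o = (a * c⁻¹) • o := by
    have h1 : M⁻¹ *ᵥ (M *ᵥ (Mᵀ *ᵥ o)) = Mᵀ *ᵥ o := by
      rw [Matrix.mulVec_mulVec (v := Mᵀ *ᵥ o), Matrix.nonsing_inv_mul M hd,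
        Matrix.one_mulVec]
    rw [hMy, Matrix.mulVec_smul, hMinvo, smul_smul] at h1
    exact h1.symm
  -- sums
  haveI : Nonempty V := ⟨v₀⟩
  have hrow : ∀ v, ∑ w, M v w = c := by
    intro v
    have h1 := congrFun hrowv v
    simpa [Matrix.mulVec, dotProduct, hodef] using h1
  have hcolp : ∀ w, ∑ v, M v w = a * c⁻¹ := by
    intro w
    have h1 := congrFun hcolv w
    simpa [Matrix.mulVec, dotProduct, hodef, Matrix.transpose_apply] using h1
  have hac : a * c⁻¹ = c := by
    have h1 : ∑ v, ∑ w, M v w = (Fintype.card V : ℝ) * c := by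
      simp [hrow, Finset.sum_const, nsmul_eq_mul]
    have h2 : ∑ w, ∑ v, M v w = (Fintype.card V : ℝ) * (a * c⁻¹) := by
      simp [hcolp, Finset.sum_const, nsmul_eq_mul]
    rw [show (∑ v, ∑ w, M v w) = ∑ w, ∑ v, M v w from Finset.sum_comm] at h1
    have hcard : (Fintype.card V : ℝ) ≠ 0 := by
      simp [Fintype.card_ne_zero]
    exact mul_left_cancel₀ hcard (h2.symm.trans h1)
  have hcol : ∀ w, ∑ v, M v w = c := fun w => (hcolp w).trans hac
  -- counting degrees
  have hcount : ∀ s : ℕ,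
      Nat.card {w : V // gdeg X₂ w = s} = Nat.card {w : V // gdeg X₁ w = s} := by
    intro s
    set P₁ : Matrix V V ℝ := Matrix.diagonal fun v => if gdeg X₁ v = s then 1 else 0
      with hP1
    set P₂ : Matrix V V ℝ := Matrix.diagonal fun v => if gdeg X₂ (e v) = s then 1 else 0
      with hP2
    have hP : P₁ * M = M * P₂ := by
      ext u v
      rw [hP1, hP2, Matrix.diagonal_mul, Matrix.mul_diagonal]
      by_cases h0 : M u v = 0
      · rw [h0, mul_zero, zero_mul]
      · rw [hzero u v h0, mul_comm]
    have htr : P₁.trace = P₂.trace := by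
      have h1 : P₂ = M⁻¹ * P₁ * M := (conj_helper hM hP).symm
      rw [h1, Matrix.trace_mul_cycle, Matrix.mul_nonsing_inv M hd, one_mul]
    have h1 : P₁.trace = (Fintype.card {w : V // gdeg X₁ w = s} : ℝ) := by
      rw [hP1, Matrix.trace_diagonal]
      rw [Finset.sum_boole, Fintype.card_subtype]
    have h2 : P₂.trace = (Fintype.card {v : V // gdeg X₂ (e v) = s} : ℝ) := by
      rw [hP2, Matrix.trace_diagonal]
      rw [Finset.sum_boole, Fintype.card_subtype]
    have h3 : Fintype.card {w : V // gdeg X₁ w = s}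
        = Fintype.card {v : V // gdeg X₂ (e v) = s} := by
      have h4 := h1.symm.trans (htr.trans h2)
      exact_mod_cast h4
    have h5 : Fintype.card {v : V // gdeg X₂ (e v) = s}
        = Fintype.card {w : V // gdeg X₂ w = s} :=
      Fintype.card_congr (e.subtypeEquiv fun v => Iff.rfl)
    rw [Nat.card_eq_fintype_card, Nat.card_eq_fintype_card, ← h5, ← h3]
  -- assemble
  set M' : Matrix (V ⊕ Σ j : Fin l, Fin (N j)) (V ⊕ Σ j : Fin l, Fin (N j)) ℝ :=
    Matrix.fromBlocks M 0 0 (c • 1) with hM'def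
  have hM' : IsUnit M' := by
    rw [hM'def, Matrix.isUnit_iff_isUnit_det, Matrix.det_fromBlocks_zero₂₁,
      Matrix.det_smul, Matrix.det_one, mul_one]
    exact hd.mul ((isUnit_iff_ne_zero.mpr hc0).pow _)
  have hE : ⇑(Equiv.sumCongr e (Equiv.refl (Σ j : Fin l, Fin (N j))))
      = Sum.map ⇑e id := by
    funext x; cases x <;> rfl
  refine ⟨Equiv.sumCongr e (Equiv.refl _), M', hM', conj_helper hM' ?_, conj_helper hM' ?_⟩
  · rw [hE, adjMat_addDom, adjMat_addDom, fromBlocks_submatrix, hM'def,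
      Matrix.fromBlocks_multiply, Matrix.fromBlocks_multiply]
    simp only [Matrix.mul_zero, Matrix.zero_mul, add_zero, zero_add, Matrix.submatrix_zero]
    have key2 : (Bmat X₁ dd fun j => Nat.card {x : V // gdeg X₁ x = d (Fin.castLE hl j)})
          * (c • (1 : Matrix (Σ j : Fin l, Fin (N j)) (Σ j : Fin l, Fin (N j)) ℝ))
        = M * (Bmat X₂ dd fun j =>
            Nat.card {x : V // gdeg X₁ x = d (Fin.castLE hl j)}).submatrix ⇑e id := by
      rw [Matrix.mul_smul, Matrix.mul_one]
      ext v b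
      rw [Matrix.smul_apply, Matrix.mul_apply]
      have h6 : ∀ w, M v w * (Bmat X₂ dd fun j =>
            Nat.card {x : V // gdeg X₁ x = d (Fin.castLE hl j)}).submatrix (⇑e) id w b
          = M v w * (if gdeg X₁ v = dd b.1 then (1 : ℝ) else 0) := by
        intro w
        by_cases h0 : M v w = 0
        · rw [h0, zero_mul, zero_mul]
        · have h7 := hzero v w h0
          simp only [Matrix.submatrix_apply, Bmat, Matrix.of_apply, id_eq]
          rw [h7]
      rw [Finset.sum_congr rfl fun w _ => h6 w, ← Finset.sum_mul, hrow v]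
      simp only [Bmat, Matrix.of_apply, smul_eq_mul]
    have key3 : (Bmat X₁ dd fun j => Nat.card {x : V // gdeg X₁ x = d (Fin.castLE hl j)})ᵀ * M
        = (c • (1 : Matrix (Σ j : Fin l, Fin (N j)) (Σ j : Fin l, Fin (N j)) ℝ)) * ((Bmat X₂ dd fun j =>
            Nat.card {x : V // gdeg X₁ x = d (Fin.castLE hl j)})ᵀ.submatrix id ⇑e) := by
      rw [Matrix.smul_mul, Matrix.one_mul]
      ext b w
      rw [Matrix.mul_apply, Matrix.smul_apply]
      have h6 : ∀ v, (Bmat X₁ dd fun j =>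
            Nat.card {x : V // gdeg X₁ x = d (Fin.castLE hl j)})ᵀ b v * M v w
          = (if gdeg X₂ (e w) = dd b.1 then (1 : ℝ) else 0) * M v w := by
        intro v
        by_cases h0 : M v w = 0
        · rw [h0, mul_zero, mul_zero]
        · have h7 := hzero v w h0
          simp only [Matrix.transpose_apply, Bmat, Matrix.of_apply]
          rw [h7]
      rw [Finset.sum_congr rfl fun v _ => h6 v, ← Finset.mul_sum, hcol w]
      simp only [Matrix.submatrix_apply, Matrix.transpose_apply, Bmat, Matrix.of_apply,
        smul_eq_mul, id_eq]
      exact mul_comm _ _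
    exact Matrix.fromBlocks_inj.mpr ⟨hAM, key2, key3, by simp⟩
  · rw [hE, degMat_sum_type, degMat_sum_type, fromBlocks_submatrix, hM'def,
      Matrix.fromBlocks_multiply, Matrix.fromBlocks_multiply]
    simp only [Matrix.mul_zero, Matrix.zero_mul, add_zero, zero_add, Matrix.submatrix_zero]
    have keyD1 : (Matrix.diagonal fun a : V =>
          (gdeg (addDominators X₁ dd fun j =>
            Nat.card {x : V // gdeg X₁ x = d (Fin.castLE hl j)}) (Sum.inl a) : ℝ)) * M
        = M * (Matrix.diagonal fun a : V =>
          (gdeg (addDominators X₂ dd fun j =>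
            Nat.card {x : V // gdeg X₁ x = d (Fin.castLE hl j)}) (Sum.inl a) : ℝ)).submatrix
            ⇑e ⇑e := by
      rw [Matrix.submatrix_diagonal_equiv]
      ext u v
      rw [Matrix.diagonal_mul, Matrix.mul_diagonal, Function.comp_apply]
      by_cases h0 : M u v = 0
      · rw [h0, mul_zero, zero_mul]
      · rw [gdeg_addDom_inl, gdeg_addDom_inl, hzero u v h0]
        exact mul_comm _ _
    have keyD4 : (Matrix.diagonal fun b : Σ j : Fin l,
            Fin (Nat.card {x : V // gdeg X₁ x = d (Fin.castLE hl j)}) =>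
          (gdeg (addDominators X₁ dd fun j =>
            Nat.card {x : V // gdeg X₁ x = d (Fin.castLE hl j)}) (Sum.inr b) : ℝ))
          * (c • (1 : Matrix (Σ j : Fin l, Fin (N j)) (Σ j : Fin l, Fin (N j)) ℝ))
        = (c • (1 : Matrix (Σ j : Fin l, Fin (N j)) (Σ j : Fin l, Fin (N j)) ℝ)) * (Matrix.diagonal fun b : Σ j : Fin l,
            Fin (Nat.card {x : V // gdeg X₁ x = d (Fin.castLE hl j)}) =>
          (gdeg (addDominators X₂ dd fun j =>
            Nat.card {x : V // gdeg X₁ x = d (Fin.castLE hl j)}) (Sum.inr b) : ℝ)).submatrix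
            id id := by
      rw [Matrix.submatrix_id_id]
      have h8 : (fun b : Σ j : Fin l,
            Fin (Nat.card {x : V // gdeg X₁ x = d (Fin.castLE hl j)}) =>
          (gdeg (addDominators X₁ dd fun j =>
            Nat.card {x : V // gdeg X₁ x = d (Fin.castLE hl j)}) (Sum.inr b) : ℝ))
          = fun b =>
          (gdeg (addDominators X₂ dd fun j =>
            Nat.card {x : V // gdeg X₁ x = d (Fin.castLE hl j)}) (Sum.inr b) : ℝ) := by
        funext b
        rw [gdeg_addDom_inr, gdeg_addDom_inr, hcount]
      rw [h8, Matrix.mul_smul, Matrix.smul_mul, Matrix.mul_one, Matrix.one_mul]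
    exact Matrix.fromBlocks_inj.mpr ⟨keyD1, by simp, by simp, keyD4⟩
end
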